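/- arXiv:0707.1361 — 2 statements merged into one kernel-verified Lean document; each statement's English description precedes it below -/
import Mathlib

section
/- Let f and g be w-homogeneous polynomials in k[x] with deg_w f > 0 and deg_w g > 0, for some w ∈ Γ^n, and suppose l and m are coprime natural numbers and α ∈ k satisfies g^l = α·f^m. Then I(k[f], g) = ( y^l − α·f^m )·k[f][y], i.e., the kernel of the substitution map k[f][y] → k[x], Φ ↦ Φ(g), is the principal ideal generated by y^l − α·f^m. -/
open MvPolynomial Polynomial

set_option synthInstance.maxHeartbeats 1000000
set_option maxHeartbeats 1000000

variable {k : Type*} [Field k] [CharZero k] {n : ℕ}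
variable {Γ : Type*} [AddCommGroup Γ] [LinearOrder Γ] [IsOrderedAddMonoid Γ]

/-- The `w`-degree of a multivariate polynomial, with `wdeg w 0 = ⊥ = -∞`. -/
noncomputable def wdeg (w : Fin n → Γ) (f : MvPolynomial (Fin n) k) : WithBot Γ :=
  f.support.sup fun d => ((∑ i, d i • w i : Γ) : WithBot Γ)

/-- The leading `w`-homogeneous form `f^w` of `f`. -/
noncomputable def lform (w : Fin n → Γ) (f : MvPolynomial (Fin n) k) :
    MvPolynomial (Fin n) k :=
  letI : DecidableEq (WithBot Γ) := Classical.decEq _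
  ∑ d ∈ f.support.filter
      (fun d => ((∑ i, d i • w i : Γ) : WithBot Γ) = wdeg w f),
    MvPolynomial.monomial d (f.coeff d)

/-- `deg_w^g Φ = max_i deg_w (φ_i g^i)` for `Φ = Σ_i φ_i y^i`. -/
noncomputable def wdegG (w : Fin n → Γ) (g : MvPolynomial (Fin n) k)
    (Φ : Polynomial (MvPolynomial (Fin n) k)) : WithBot Γ :=
  Φ.support.sup fun i => wdeg w (Φ.coeff i * g ^ i)

/-- The leading form `Φ^{w,g}` of `Φ` for the grading in which `x_j` has weight `w_j`
and `y` has weight `deg_w g`: the sum of `φ_i^w y^i` over those `i` with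
`deg_w (φ_i g^i) = deg_w^g Φ`. -/
noncomputable def pLform (w : Fin n → Γ) (g : MvPolynomial (Fin n) k)
    (Φ : Polynomial (MvPolynomial (Fin n) k)) : Polynomial (MvPolynomial (Fin n) k) :=
  letI : DecidableEq (WithBot Γ) := Classical.decEq _
  ∑ i ∈ Φ.support.filter (fun i => wdeg w (Φ.coeff i * g ^ i) = wdegG w g Φ),
    Polynomial.C (lform w (Φ.coeff i)) * Polynomial.X ^ i

/-- `m_w^g(Φ) = min { i : deg_w^g (∂_y^i Φ) = deg_w ((∂_y^i Φ)(g)) }`. -/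
noncomputable def mwg (w : Fin n → Γ) (g : MvPolynomial (Fin n) k)
    (Φ : Polynomial (MvPolynomial (Fin n) k)) : ℕ :=
  sInf {i : ℕ |
    wdegG w g (Polynomial.derivative^[i] Φ) = wdeg w ((Polynomial.derivative^[i] Φ).eval g)}

/-- The `w`-degree of the differential form `dh_1 ∧ ⋯ ∧ dh_s`: the maximum over all
`s`-tuples of indices of the `w`-degree of the corresponding `s × s` Jacobian minor
plus the sum of the corresponding weights (noninjective tuples contribute `⊥`). -/
noncomputable def wedgeDeg (w : Fin n → Γ) {s : ℕ} (h : Fin s → MvPolynomial (Fin n) k) :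
    WithBot Γ :=
  Finset.univ.sup fun e : Fin s → Fin n =>
    wdeg w (Matrix.det (Matrix.of fun a b : Fin s => MvPolynomial.pderiv (e b) (h a)))
      + ((∑ b, w (e b) : Γ) : WithBot Γ)

/-- The initial algebra `A^w`: the `k`-subalgebra generated by `f^w` for `f ∈ A \ {0}`. -/
noncomputable def initAlg (w : Fin n → Γ) (A : Subalgebra k (MvPolynomial (Fin n) k)) :
    Subalgebra k (MvPolynomial (Fin n) k) :=
  Algebra.adjoin k (lform w '' ((A : Set (MvPolynomial (Fin n) k)) \ {0}))

/-- The field of fractions `K^w` of `A^w`, realized as a subfield of the fraction field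
of `k[x]`. -/
noncomputable def KW (w : Fin n → Γ) (A : Subalgebra k (MvPolynomial (Fin n) k)) :
    Subfield (FractionRing (MvPolynomial (Fin n) k)) :=
  Subfield.closure
    (algebraMap (MvPolynomial (Fin n) k) (FractionRing (MvPolynomial (Fin n) k)) ''
      (initAlg w A : Set (MvPolynomial (Fin n) k)))

/-- The field of fractions of a subalgebra `A` of `k[x]`, realized as a subfield of the
fraction field of `k[x]`. -/
noncomputable def fracSub (A : Subalgebra k (MvPolynomial (Fin n) k)) :
    Subfield (FractionRing (MvPolynomial (Fin n) k)) :=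
  Subfield.closure
    (algebraMap (MvPolynomial (Fin n) k) (FractionRing (MvPolynomial (Fin n) k)) ''
      (A : Set (MvPolynomial (Fin n) k)))

/-- A polynomial is `w`-homogeneous if all its monomials have the same `w`-degree. -/
def IsWHom (w : Fin n → Γ) (f : MvPolynomial (Fin n) k) : Prop :=
  ∃ γ : Γ, ∀ d ∈ f.support, (∑ i, d i • w i : Γ) = γ

set_option linter.unusedSectionVars false
set_option linter.unusedVariables false

/-- auxiliary homogeneity predicate -/
def HomW (w : Fin n → Γ) (γ : Γ) (p : MvPolynomial (Fin n) k) : Prop :=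
  ∀ d ∈ p.support, (∑ i, d i • w i : Γ) = γ

lemma HomW.mul {w : Fin n → Γ} {γ δ : Γ} {p q : MvPolynomial (Fin n) k}
    (hp : HomW w γ p) (hq : HomW w δ q) : HomW w (γ + δ) (p * q) := by
  intro d hd
  have := MvPolynomial.support_mul p q hd
  obtain ⟨d1, h1, d2, h2, rfl⟩ := Finset.mem_add.mp this
  rw [← hp _ h1, ← hq _ h2, ← Finset.sum_add_distrib]
  exact Finset.sum_congr rfl fun i _ => by simp [add_smul]

lemma HomW.C {w : Fin n → Γ} (a : k) : HomW w 0 (MvPolynomial.C a : MvPolynomial (Fin n) k) := by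
  intro d hd
  have : d = 0 := by
    by_contra h
    simp [MvPolynomial.mem_support_iff, MvPolynomial.coeff_C] at hd
    exact h hd.1.symm
  simp [this]

lemma HomW.pow {w : Fin n → Γ} {γ : Γ} {p : MvPolynomial (Fin n) k}
    (hp : HomW w γ p) (i : ℕ) : HomW w (i • γ) (p ^ i) := by
  induction i with
  | zero =>
      simpa using (HomW.C (1 : k) : HomW w 0 _)
  | succ i ih =>
      have := ih.mul hp
      rw [← pow_succ] at this
      simpa [succ_nsmul] using this

lemma exists_homW {w : Fin n → Γ} {f : MvPolynomial (Fin n) k}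
    (hf : IsWHom w f) (hdf : ((0 : Γ) : WithBot Γ) < wdeg w f) :
    ∃ γ : Γ, 0 < γ ∧ HomW w γ f ∧ f ≠ 0 := by
  obtain ⟨γ, hγ⟩ := hf
  have hf0 : f ≠ 0 := by
    rintro rfl
    simp only [wdeg, MvPolynomial.support_zero, Finset.sup_empty] at hdf
    exact (not_lt_bot hdf)
  obtain ⟨d0, hd0⟩ := Finset.nonempty_iff_ne_empty.mpr
    (fun h => hf0 (MvPolynomial.support_eq_empty.mp h))
  have hw : wdeg w f = (γ : WithBot Γ) := by
    rw [wdeg, Finset.sup_congr rfl (fun d hd => by rw [hγ d hd])]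
    exact Finset.sup_const ⟨d0, hd0⟩ _
  rw [hw] at hdf
  exact ⟨γ, by exact_mod_cast hdf, hγ, hf0⟩

lemma degd_add (w : Fin n → Γ) (d e : Fin n →₀ ℕ) :
    (∑ i, (d + e) i • w i : Γ) = (∑ i, d i • w i) + ∑ i, e i • w i := by
  rw [← Finset.sum_add_distrib]
  exact Finset.sum_congr rfl fun i _ => by simp [add_smul]

lemma lin_indep (w : Fin n → Γ) (f g : MvPolynomial (Fin n) k)
    (hf : IsWHom w f) (hg : IsWHom w g)
    (hdf : ((0 : Γ) : WithBot Γ) < wdeg w f) (hdg : ((0 : Γ) : WithBot Γ) < wdeg w g)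
    (l m : ℕ) (hl : 0 < l) (hm : 0 < m) (hco : Nat.Coprime l m)
    (α : k) (hrel : g ^ l = MvPolynomial.C α * f ^ m)
    (φ : ℕ → MvPolynomial (Fin n) k)
    (hφ : ∀ i, φ i ∈ Algebra.adjoin k ({f} : Set (MvPolynomial (Fin n) k)))
    (hsum : ∑ i ∈ Finset.range l, φ i * g ^ i = 0) :
    ∀ i < l, φ i = 0 := by
  obtain ⟨γf, hγf, hWf, hf0⟩ := exists_homW hf hdf
  obtain ⟨γg, hγg, hWg, hg0⟩ := exists_homW hg hdg
  have hgl0 : g ^ l ≠ 0 := pow_ne_zero _ hg0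
  obtain ⟨d0, hd0⟩ := Finset.nonempty_iff_ne_empty.mpr
    (fun h => hgl0 (MvPolynomial.support_eq_empty.mp h))
  have hrel' : l • γg = m • γf := by
    have h1 := (hWg.pow l) d0 hd0
    have h2 := ((HomW.C α).mul (hWf.pow m)) d0 (by rwa [← hrel])
    rw [zero_add] at h2
    rw [← h1, h2]
  have hsuppA : ∀ q : MvPolynomial (Fin n) k,
      q ∈ Algebra.adjoin k ({f} : Set (MvPolynomial (Fin n) k)) →
      ∀ d ∈ q.support, ∃ a : ℕ, (∑ i, d i • w i : Γ) = a • γf := by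
    intro q hq
    rw [Algebra.adjoin_singleton_eq_range_aeval] at hq
    obtain ⟨p, hp⟩ := hq
    suffices H : ∀ p : k[X], ∀ d ∈ (Polynomial.aeval f p : MvPolynomial (Fin n) k).support,
        ∃ a : ℕ, (∑ i, d i • w i : Γ) = a • γf by
      rw [← hp]; exact H p
    intro p
    induction p using Polynomial.induction_on' with
    | add p q hp hq =>
        intro d hd
        rw [map_add] at hd
        rcases Finset.mem_union.mp (MvPolynomial.support_add hd) with h | h
        · exact hp d h
        · exact hq d h
    | monomial a ca =>
        intro d hd
        rw [Polynomial.aeval_monomial] at hd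
        have := ((HomW.C ca).mul (hWf.pow a)) d (by
          rwa [show (algebraMap k (MvPolynomial (Fin n) k)) ca = MvPolynomial.C ca from rfl] at hd)
        exact ⟨a, by simpa using this⟩
  have hinj : Function.Injective (fun a : ℕ => a • γf) := by
    intro a b hab
    rcases lt_trichotomy a b with h | h | h
    · exact absurd hab (ne_of_lt (nsmul_lt_nsmul_left hγf h))
    · exact h
    · exact absurd hab.symm (ne_of_lt (nsmul_lt_nsmul_left hγf h))
  have hscale : ∀ a i : ℕ, (l * a + i * m) • γf = l • (a • γf + i • γg) := by
    intro a i
    calc (l * a + i * m) • γf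
        = a • l • γf + m • i • γf := by rw [add_nsmul, mul_nsmul, mul_nsmul]
      _ = a • l • γf + i • m • γf := by rw [smul_comm m i]
      _ = a • l • γf + i • l • γg := by rw [hrel']
      _ = l • a • γf + l • i • γg := by rw [smul_comm a l, smul_comm i l]
      _ = l • (a • γf + i • γg) := (smul_add l _ _).symm
  have hdisj : ∀ i j : ℕ, i < j → j < l → ∀ d : Fin n →₀ ℕ,
      d ∈ (φ i * g ^ i).support → d ∈ (φ j * g ^ j).support → False := by
    intro i j hij hjl d hdi hdj
    obtain ⟨d1, h1, d2, h2, hs1⟩ := Finset.mem_add.mp (MvPolynomial.support_mul _ _ hdi)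
    obtain ⟨e1, k1, e2, k2, hs2⟩ := Finset.mem_add.mp (MvPolynomial.support_mul _ _ hdj)
    obtain ⟨a, ha⟩ := hsuppA (φ i) (hφ i) d1 h1
    obtain ⟨b, hb⟩ := hsuppA (φ j) (hφ j) e1 k1
    have hgi := (hWg.pow i) d2 h2
    have hgj := (hWg.pow j) e2 k2
    have hd_eq : a • γf + i • γg = b • γf + j • γg := by
      have t1 : (∑ t, d t • w t : Γ) = a • γf + i • γg := by
        rw [← hs1, degd_add, ha, hgi]
      have t2 : (∑ t, d t • w t : Γ) = b • γf + j • γg := by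
        rw [← hs2, degd_add, hb, hgj]
      rw [← t1, t2]
    have hnat : l * a + i * m = l * b + j * m := by
      apply hinj
      show (l * a + i * m) • γf = (l * b + j * m) • γf
      rw [hscale, hscale, hd_eq]
    set e := j - i with he_def
    have hjm : j * m = i * m + e * m := by
      rw [← add_mul]; congr 1; omega
    have hla : l * a = l * b + e * m := by omega
    have hba : b ≤ a := Nat.le_of_mul_le_mul_left (by omega) hl
    have hdvd : l ∣ e * m := ⟨a - b, by rw [Nat.mul_sub]; omega⟩
    have hdvd2 : l ∣ e := hco.dvd_of_dvd_mul_right hdvd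
    have he : 0 < e := by omega
    have := Nat.le_of_dvd he hdvd2
    omega
  intro i0 hi0
  have hzero : φ i0 * g ^ i0 = 0 := by
    by_contra hne
    obtain ⟨d, hd⟩ := Finset.nonempty_iff_ne_empty.mpr
      (fun h => hne (MvPolynomial.support_eq_empty.mp h))
    have hco0 : MvPolynomial.coeff d (∑ i ∈ Finset.range l, φ i * g ^ i)
        = MvPolynomial.coeff d (φ i0 * g ^ i0) := by
      rw [MvPolynomial.coeff_sum]
      apply Finset.sum_eq_single_of_mem i0 (Finset.mem_range.mpr hi0)
      intro j hj hne'
      by_contra hc0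
      have hdj : d ∈ (φ j * g ^ j).support := MvPolynomial.mem_support_iff.mpr hc0
      rcases lt_or_gt_of_ne hne' with h | h
      · exact hdisj j i0 h hi0 d hdj hd
      · exact hdisj i0 j h (Finset.mem_range.mp hj) d hd hdj
    rw [hsum] at hco0
    simp only [MvPolynomial.coeff_zero] at hco0
    exact (MvPolynomial.mem_support_iff.mp hd) hco0.symm
  rcases mul_eq_zero.mp hzero with h | h
  · exact h
  · exact absurd h (pow_ne_zero _ hg0)


/-- If `f, g` are `w`-homogeneous of positive `w`-degree, `l, m` are coprime natural
numbers and `α ∈ k` satisfies `g^l = α f^m`, then the kernel of the substitution map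
`k[f][y] → k[x]`, `Φ ↦ Φ(g)`, is the principal ideal generated by `y^l − α f^m`. -/
theorem stmt10 (w : Fin n → Γ) (f g : MvPolynomial (Fin n) k)
    (hf : IsWHom w f) (hg : IsWHom w g)
    (hdf : ((0 : Γ) : WithBot Γ) < wdeg w f) (hdg : ((0 : Γ) : WithBot Γ) < wdeg w g)
    (l m : ℕ) (hl : 0 < l) (hm : 0 < m) (hco : Nat.Coprime l m)
    (α : k) (hrel : g ^ l = MvPolynomial.C α * f ^ m)
    (c : Algebra.adjoin k ({f} : Set (MvPolynomial (Fin n) k)))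
    (hc : (c : MvPolynomial (Fin n) k) = MvPolynomial.C α * f ^ m) :
    RingHom.ker
        (Polynomial.aeval g :
          Polynomial (Algebra.adjoin k ({f} : Set (MvPolynomial (Fin n) k)))
            →ₐ[Algebra.adjoin k ({f} : Set (MvPolynomial (Fin n) k))]
          MvPolynomial (Fin n) k)
      = Ideal.span {Polynomial.X ^ l - Polynomial.C c} := by
  have hmonic : (Polynomial.X ^ l - Polynomial.C c).Monic :=
    Polynomial.monic_X_pow_sub_C c hl.ne'
  have hPg : Polynomial.aeval g (Polynomial.X ^ l - Polynomial.C c) = 0 := by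
    have hms := map_sub (Polynomial.aeval g :
      Polynomial (Algebra.adjoin k ({f} : Set (MvPolynomial (Fin n) k)))
        →ₐ[Algebra.adjoin k ({f} : Set (MvPolynomial (Fin n) k))] MvPolynomial (Fin n) k)
      (Polynomial.X ^ l) (Polynomial.C c)
    rw [hms, map_pow, Polynomial.aeval_X, Polynomial.aeval_C,
      show (algebraMap (Algebra.adjoin k ({f} : Set (MvPolynomial (Fin n) k)))
        (MvPolynomial (Fin n) k)) c = (c : MvPolynomial (Fin n) k) from rfl,
      hc, ← hrel, sub_self]
  have key : ∀ R : Polynomial (Algebra.adjoin k ({f} : Set (MvPolynomial (Fin n) k))),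
      R.degree < (l : ℕ) → Polynomial.aeval g R = 0 → R = 0 := by
    intro R hdeg h0
    by_cases hR : R = 0
    · exact hR
    have hnat : R.natDegree < l := (Polynomial.natDegree_lt_iff_degree_lt hR).mpr hdeg
    have hsum : ∑ i ∈ Finset.range l, ((R.coeff i : MvPolynomial (Fin n) k)) * g ^ i = 0 := by
      rw [Polynomial.aeval_eq_sum_range' hnat] at h0
      rw [← h0]
      apply Finset.sum_congr rfl
      intro i _
      rw [Algebra.smul_def]
      rfl
    have hall := lin_indep w f g hf hg hdf hdg l m hl hm hco α hrel
      (fun i => ((R.coeff i : MvPolynomial (Fin n) k))) (fun i => (R.coeff i).2) hsum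
    apply Polynomial.ext
    intro i
    rw [Polynomial.coeff_zero]
    by_cases hi : i < l
    · exact ZeroMemClass.coe_eq_zero.mp (hall i hi)
    · exact Polynomial.coeff_eq_zero_of_natDegree_lt (lt_of_lt_of_le hnat (not_lt.mp hi))
  apply le_antisymm
  · intro Φ hΦ
    have hΦ0 : Polynomial.aeval g Φ = 0 := by rwa [RingHom.mem_ker] at hΦ
    have hdiv := Polynomial.modByMonic_add_div Φ (Polynomial.X ^ l - Polynomial.C c)
    have hmod0 : Φ %ₘ (Polynomial.X ^ l - Polynomial.C c) = 0 := by
      apply key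
      · calc (Φ %ₘ (Polynomial.X ^ l - Polynomial.C c)).degree
            < (Polynomial.X ^ l - Polynomial.C c).degree :=
              Polynomial.degree_modByMonic_lt Φ hmonic
          _ = (l : ℕ) := Polynomial.degree_X_pow_sub_C hl c
      · have h2 := congrArg (Polynomial.aeval g) hdiv
        rw [map_add, map_mul, hPg, zero_mul, add_zero] at h2
        rw [h2, hΦ0]
    rw [Ideal.mem_span_singleton]
    refine ⟨Φ /ₘ (Polynomial.X ^ l - Polynomial.C c), ?_⟩
    conv_lhs => rw [← hdiv, hmod0, zero_add]
  · rw [Ideal.span_le, Set.singleton_subset_iff]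
    exact RingHom.mem_ker.mpr hPg
end

section
/- Let f and g be w-homogeneous polynomials in k[x] with deg_w f > 0 and deg_w g > 0, for some w ∈ Γ^n, and suppose l and m are coprime natural numbers and α ∈ k satisfies g^l = α·f^m. Then the field extension degree [k(f)(g) : k(f)] equals l. -/
open MvPolynomial Polynomial

set_option synthInstance.maxHeartbeats 1000000
set_option maxHeartbeats 1000000

variable {k : Type*} [Field k] [CharZero k] {n : ℕ}
variable {Γ : Type*} [AddCommGroup Γ] [LinearOrder Γ] [IsOrderedAddMonoid Γ]

section AuxLemmas

variable {k : Type*} [Field k] {n : ℕ} {Γ : Type*} [AddCommGroup Γ] [LinearOrder Γ] [IsOrderedAddMonoid Γ]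

lemma wdeg_le_of_hom {w : Fin n → Γ} {f : MvPolynomial (Fin n) k} {γ : Γ}
    (h : ∀ d ∈ f.support, (∑ i, d i • w i : Γ) = γ) : wdeg w f ≤ (γ : WithBot Γ) := by
  unfold wdeg
  exact Finset.sup_le fun d hd => by rw [h d hd]

lemma wdeg_eq_of_hom {w : Fin n → Γ} {f : MvPolynomial (Fin n) k} {γ : Γ}
    (h : ∀ d ∈ f.support, (∑ i, d i • w i : Γ) = γ) (hf : f ≠ 0) :
    wdeg w f = (γ : WithBot Γ) := by
  refine le_antisymm (wdeg_le_of_hom h) ?_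
  obtain ⟨d, hd⟩ := MvPolynomial.support_nonempty.2 hf
  unfold wdeg
  rw [← h d hd]
  exact Finset.le_sup (f := fun d => ((∑ i, d i • w i : Γ) : WithBot Γ)) hd

lemma hom_mul {w : Fin n → Γ} {p q : MvPolynomial (Fin n) k} {γ δ : Γ}
    (hp : ∀ d ∈ p.support, (∑ i, d i • w i : Γ) = γ)
    (hq : ∀ d ∈ q.support, (∑ i, d i • w i : Γ) = δ) :
    ∀ d ∈ (p * q).support, (∑ i, d i • w i : Γ) = γ + δ := by
  classical
  intro d hd
  obtain ⟨a, ha, b, hb, rfl⟩ := Finset.mem_add.mp (MvPolynomial.support_mul p q hd)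
  rw [← hp a ha, ← hq b hb, ← Finset.sum_add_distrib]
  exact Finset.sum_congr rfl fun i _ => by rw [Finsupp.add_apply, add_smul]

lemma hom_pow {w : Fin n → Γ} {p : MvPolynomial (Fin n) k} {γ : Γ}
    (hp : ∀ d ∈ p.support, (∑ i, d i • w i : Γ) = γ) (N : ℕ) :
    ∀ d ∈ (p ^ N).support, (∑ i, d i • w i : Γ) = N • γ := by
  induction N with
  | zero =>
    intro d hd
    have hd0 : d = 0 := by
      by_contra hne
      have h1 := MvPolynomial.mem_support_iff.mp hd
      rw [pow_zero, MvPolynomial.coeff_one, if_neg (Ne.symm hne)] at h1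
      exact h1 rfl
    subst hd0; simp
  | succ N ih =>
    intro d hd
    rw [pow_succ] at hd
    rw [succ_nsmul]
    exact hom_mul ih hp d hd

lemma hom_C {w : Fin n → Γ} (c : k) :
    ∀ d ∈ (MvPolynomial.C c : MvPolynomial (Fin n) k).support,
      (∑ i, d i • w i : Γ) = 0 := by
  intro d hd
  have hd0 : d = 0 := by
    by_contra hne
    have h1 := MvPolynomial.mem_support_iff.mp hd
    rw [MvPolynomial.coeff_C, if_neg (Ne.symm hne)] at h1
    exact h1 rfl
  subst hd0; simp

lemma wdeg_add_le {w : Fin n → Γ} (p q : MvPolynomial (Fin n) k) :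
    wdeg w (p + q) ≤ wdeg w p ⊔ wdeg w q := by
  classical
  unfold wdeg
  refine Finset.sup_le fun d hd => ?_
  rcases Finset.mem_union.mp (MvPolynomial.support_add hd) with h | h
  · exact le_sup_of_le_left (Finset.le_sup (f := fun d => ((∑ i, d i • w i : Γ) : WithBot Γ)) h)
  · exact le_sup_of_le_right (Finset.le_sup (f := fun d => ((∑ i, d i • w i : Γ) : WithBot Γ)) h)

lemma wdeg_sum_le {w : Fin n → Γ} {ι : Type*} (s : Finset ι)
    (t : ι → MvPolynomial (Fin n) k) :
    wdeg w (∑ i ∈ s, t i) ≤ s.sup fun i => wdeg w (t i) := by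
  classical
  induction s using Finset.induction with
  | empty => simp [wdeg]
  | insert _ _ hx ih =>
    rw [Finset.sum_insert hx, Finset.sup_insert]
    exact (wdeg_add_le _ _).trans (sup_le_sup le_rfl ih)

lemma eval₂_C_ne_zero {w : Fin n → Γ} {f : MvPolynomial (Fin n) k} {γ : Γ}
    (hfh : ∀ d ∈ f.support, (∑ i, d i • w i : Γ) = γ) (hγ : 0 < γ) (hf0 : f ≠ 0)
    {p : Polynomial k} (hp : p ≠ 0) : Polynomial.eval₂ MvPolynomial.C f p ≠ 0 := by
  intro h0
  set N := p.natDegree with hN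
  set S : MvPolynomial (Fin n) k :=
    ∑ i ∈ Finset.range N, MvPolynomial.C (p.coeff i) * f ^ i with hS
  have hsplit : Polynomial.eval₂ MvPolynomial.C f p
      = S + MvPolynomial.C (p.coeff N) * f ^ N := by
    rw [Polynomial.eval₂_eq_sum_range, Finset.sum_range_succ, hS]
  have hlead : p.coeff N ≠ 0 := by
    rw [hN]; exact Polynomial.leadingCoeff_ne_zero.mpr hp
  have hCfN : MvPolynomial.C (p.coeff N) * f ^ N ≠ 0 :=
    mul_ne_zero (by simpa using hlead) (pow_ne_zero _ hf0)
  have hEq : MvPolynomial.C (p.coeff N) * f ^ N = -S := by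
    rw [hsplit] at h0
    exact eq_neg_of_add_eq_zero_right h0
  have hwT : wdeg w (MvPolynomial.C (p.coeff N) * f ^ N) = ((N • γ : Γ) : WithBot Γ) := by
    refine wdeg_eq_of_hom ?_ hCfN
    intro d hd
    simpa using hom_mul (hom_C (w := w) _) (hom_pow hfh N) d hd
  have hwS : wdeg w S < ((N • γ : Γ) : WithBot Γ) := by
    rcases Nat.eq_zero_or_pos N with hN0 | hN0
    · have : S = 0 := by rw [hS, hN0]; simp
      rw [this]
      have : wdeg w (0 : MvPolynomial (Fin n) k) = ⊥ := by simp [wdeg]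
      rw [this]
      exact WithBot.bot_lt_coe _
    · refine lt_of_le_of_lt ((wdeg_sum_le _ _).trans (Finset.sup_le fun i hi => ?_))
        (WithBot.coe_lt_coe.mpr (nsmul_lt_nsmul_left hγ (by omega : N - 1 < N)))
      have hle : wdeg w (MvPolynomial.C (p.coeff i) * f ^ i) ≤ ((i • γ : Γ) : WithBot Γ) := by
        refine wdeg_le_of_hom ?_
        intro d hd
        simpa using hom_mul (hom_C (w := w) _) (hom_pow hfh i) d hd
      refine hle.trans (WithBot.coe_le_coe.mpr (nsmul_le_nsmul_left hγ.le ?_))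
      have := Finset.mem_range.mp hi
      omega
  have hwneg : wdeg w (-S) = wdeg w S := by
    unfold wdeg; rw [MvPolynomial.support_neg]
  rw [hEq, hwneg] at hwT
  rw [hwT] at hwS
  exact lt_irrefl _ hwS

end AuxLemmas

/-- If `f, g` are `w`-homogeneous of positive `w`-degree, `l, m` are coprime natural
numbers and `α ∈ k` satisfies `g^l = α f^m`, then `[k(f)(g) : k(f)] = l`. -/
theorem stmt11 (w : Fin n → Γ) (f g : MvPolynomial (Fin n) k)
    (hf : IsWHom w f) (hg : IsWHom w g)
    (hdf : ((0 : Γ) : WithBot Γ) < wdeg w f) (hdg : ((0 : Γ) : WithBot Γ) < wdeg w g)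
    (l m : ℕ) (hl : 0 < l) (hm : 0 < m) (hco : Nat.Coprime l m)
    (α : k) (hrel : g ^ l = MvPolynomial.C α * f ^ m) :
    Module.finrank (fracSub (Algebra.adjoin k ({f} : Set (MvPolynomial (Fin n) k))))
      (IntermediateField.adjoin
        (fracSub (Algebra.adjoin k ({f} : Set (MvPolynomial (Fin n) k))))
        {algebraMap (MvPolynomial (Fin n) k) (FractionRing (MvPolynomial (Fin n) k)) g})
      = l := by
  classical
  obtain ⟨γ, hfγ⟩ := hf
  set L := FractionRing (MvPolynomial (Fin n) k) with hLdef
  set φ := algebraMap (MvPolynomial (Fin n) k) L with hφdef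
  have hφinj : Function.Injective φ := IsFractionRing.injective _ _
  -- basic nonvanishing facts
  have hf0 : f ≠ 0 := by
    rintro rfl
    have : wdeg w (0 : MvPolynomial (Fin n) k) = ⊥ := by simp [wdeg]
    rw [this] at hdf
    exact absurd hdf (by simp)
  have hg0 : g ≠ 0 := by
    rintro rfl
    have : wdeg w (0 : MvPolynomial (Fin n) k) = ⊥ := by simp [wdeg]
    rw [this] at hdg
    exact absurd hdg (by simp)
  have hα : α ≠ 0 := by
    rintro rfl
    rw [map_zero, zero_mul] at hrel
    exact pow_ne_zero l hg0 hrel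
  have hγpos : (0 : Γ) < γ := by
    have := wdeg_eq_of_hom hfγ hf0
    rw [this] at hdf
    exact WithBot.coe_lt_coe.mp hdf
  -- the field `K = k(f)`
  set K := fracSub (Algebra.adjoin k ({f} : Set (MvPolynomial (Fin n) k))) with hKdef
  -- the map `ψ : k[T] → L`, `T ↦ φ f`
  set ψ : Polynomial k →+* L :=
    Polynomial.eval₂RingHom (φ.comp (MvPolynomial.C : k →+* MvPolynomial (Fin n) k)) (φ f)
    with hψdef
  have hψ : ∀ p : Polynomial k, ψ p = φ (Polynomial.eval₂ MvPolynomial.C f p) := by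
    intro p
    rw [hψdef, Polynomial.coe_eval₂RingHom, Polynomial.hom_eval₂]
  have hψinj : Function.Injective ψ := by
    rw [injective_iff_map_eq_zero]
    intro p hp
    by_contra hp0
    have := eval₂_C_ne_zero hfγ hγpos hf0 hp0
    rw [hψ p] at hp
    exact this (hφinj (by rwa [map_zero]))
  set Ψ : RatFunc k →+* L := IsFractionRing.lift hψinj with hΨdef
  have hΨinj : Function.Injective Ψ := Ψ.injective
  -- the range of `Ψ` is `K`
  have hsets : (ψ.range : Set L)
      = φ '' (Algebra.adjoin k ({f} : Set (MvPolynomial (Fin n) k)) : Set _) := by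
    ext x
    rw [RingHom.coe_range]
    constructor
    · rintro ⟨p, rfl⟩
      refine ⟨Polynomial.eval₂ MvPolynomial.C f p, ?_, (hψ p).symm⟩
      rw [SetLike.mem_coe, Algebra.adjoin_singleton_eq_range_aeval]
      exact ⟨p, by simp [Polynomial.aeval_def, MvPolynomial.algebraMap_eq]⟩
    · rintro ⟨q, hq, rfl⟩
      rw [SetLike.mem_coe, Algebra.adjoin_singleton_eq_range_aeval] at hq
      obtain ⟨p, rfl⟩ := hq
      exact ⟨p, by simp [hψ, Polynomial.aeval_def, MvPolynomial.algebraMap_eq]⟩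
  have hK : Ψ.fieldRange = K := by
    rw [IsFractionRing.lift_fieldRange hψinj, hKdef, fracSub]
    congr 1
  have hmem : ∀ x : RatFunc k, Ψ x ∈ K := fun x =>
    hK ▸ RingHom.mem_fieldRange.mpr ⟨x, rfl⟩
  set ρ : RatFunc k →+* K := Ψ.codRestrict K hmem with hρdef
  have hρbij : Function.Bijective ρ := by
    constructor
    · intro x y hxy
      exact hΨinj (congrArg Subtype.val hxy)
    · rintro ⟨y, hy⟩
      rw [← hK] at hy
      obtain ⟨x, hx⟩ := RingHom.mem_fieldRange.mp hy
      exact ⟨x, Subtype.ext hx⟩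
  set e : RatFunc k ≃+* K := RingEquiv.ofBijective ρ hρbij with hedef
  have hecoe : ∀ x : RatFunc k, ((e x : K) : L) = Ψ x := fun x => rfl
  -- the elements
  set F := φ f with hFdef
  set G := φ g with hGdef
  set A := φ (MvPolynomial.C α) with hAdef
  have hF0 : F ≠ 0 := fun h => hf0 (hφinj (by rwa [map_zero]))
  have hG0 : G ≠ 0 := fun h => hg0 (hφinj (by rwa [map_zero]))
  have hA0 : A ≠ 0 := fun h => hα (by
    have : MvPolynomial.C α = 0 := hφinj (by rwa [map_zero])
    simpa using this)
  have hGl : G ^ (l : ℤ) = A * F ^ (m : ℤ) := by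
    rw [zpow_natCast, zpow_natCast, hGdef, hFdef, hAdef, ← map_pow, ← map_pow, ← map_mul, hrel]
  -- Bezout
  obtain ⟨u, v, huv⟩ : ∃ u v : ℤ, u * m + v * l = 1 := by
    refine ⟨Nat.gcdB l m, Nat.gcdA l m, ?_⟩
    have h1 := Nat.gcd_eq_gcd_ab l m
    rw [hco] at h1
    push_cast at h1
    linarith
  set h : L := G ^ u * F ^ v with hhdef
  have key1 : h ^ (l : ℤ) = A ^ u * F := by
    have e1 : h ^ (l : ℤ) = G ^ (u * (l : ℤ)) * F ^ (v * (l : ℤ)) := by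
      rw [hhdef, mul_zpow, ← zpow_mul, ← zpow_mul]
    have e2 : G ^ (u * (l : ℤ)) = (A * F ^ (m : ℤ)) ^ u := by
      rw [mul_comm u (l : ℤ), zpow_mul, hGl]
    rw [e1, e2, mul_zpow, ← zpow_mul, mul_assoc, ← zpow_add₀ hF0,
      show (m : ℤ) * u + v * l = 1 by linarith, zpow_one]
  have key2 : A ^ v * h ^ (m : ℤ) = G := by
    have e3 : h ^ (m : ℤ) = G ^ (u * (m : ℤ)) * F ^ (v * (m : ℤ)) := by
      rw [hhdef, mul_zpow, ← zpow_mul, ← zpow_mul]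
    have e4 : G ^ (u * (m : ℤ)) = G * (A ^ v * F ^ ((m : ℤ) * v))⁻¹ := by
      have h5 : u * (m : ℤ) = 1 + -((l : ℤ) * v) := by linarith
      rw [h5, zpow_add₀ hG0, zpow_one, zpow_neg, zpow_mul, hGl, mul_zpow, ← zpow_mul]
    rw [e3, e4, mul_inv]
    have hAv : A ^ v ≠ 0 := zpow_ne_zero _ hA0
    have hFv : F ^ ((m : ℤ) * v) ≠ 0 := zpow_ne_zero _ hF0
    rw [mul_comm (m : ℤ) v] at hFv ⊢
    generalize A ^ v = X at hAv ⊢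
    generalize F ^ (v * (m : ℤ)) = Y at hFv ⊢
    have h1 := mul_inv_cancel₀ hAv
    have h2 := mul_inv_cancel₀ hFv
    linear_combination (G * Y * Y⁻¹) * h1 + G * h2
  have hh0 : h ≠ 0 := mul_ne_zero (zpow_ne_zero _ hG0) (zpow_ne_zero _ hF0)
  -- memberships
  have hCα : MvPolynomial.C α ∈ Algebra.adjoin k ({f} : Set (MvPolynomial (Fin n) k)) := by
    rw [← MvPolynomial.algebraMap_eq]
    exact Subalgebra.algebraMap_mem _ α
  have hAK : A ∈ K := Subfield.subset_closure ⟨_, hCα, rfl⟩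
  have hFK : F ∈ K := Subfield.subset_closure ⟨f, Algebra.self_mem_adjoin_singleton k f, rfl⟩
  have haK : A ^ u * F ∈ K := mul_mem (zpow_mem hAK u) hFK
  set a : K := ⟨A ^ u * F, haK⟩ with hadef
  set P : Polynomial K := Polynomial.X ^ l - Polynomial.C a with hPdef
  have hPmonic : P.Monic := Polynomial.monic_X_pow_sub_C _ hl.ne'
  have halg : algebraMap K L a = A ^ u * F := rfl
  have hroot : Polynomial.aeval h P = 0 := by
    rw [hPdef, map_sub, map_pow, Polynomial.aeval_X, Polynomial.aeval_C, halg,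
      ← zpow_natCast h l, key1, sub_self]
  -- irreducibility via Eisenstein over k[t]
  set c₀ : k := α ^ u with hc₀def
  have hc₀ : c₀ ≠ 0 := zpow_ne_zero _ hα
  set b : Polynomial k := Polynomial.C c₀ * Polynomial.X with hbdef
  set Q₀ : Polynomial (Polynomial k) := Polynomial.X ^ l - Polynomial.C b with hQ₀def
  have hQ₀monic : Q₀.Monic := Polynomial.monic_X_pow_sub_C _ hl.ne'
  have hQ₀deg : Q₀.natDegree = l := Polynomial.natDegree_X_pow_sub_C
  have hsp : (Ideal.span {(Polynomial.X : Polynomial k)}).IsPrime :=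
    (Ideal.span_singleton_prime Polynomial.X_ne_zero).mpr Polynomial.prime_X
  have heis : Q₀.IsEisensteinAt (Ideal.span {Polynomial.X}) := by
    constructor
    · rw [hQ₀monic.leadingCoeff]
      intro h1
      exact hsp.ne_top ((Ideal.eq_top_iff_one _).mpr h1)
    · intro i hi
      rw [hQ₀deg] at hi
      rw [hQ₀def, Polynomial.coeff_sub, Polynomial.coeff_X_pow,
        if_neg (by omega : ¬ i = l), Polynomial.coeff_C]
      rcases eq_or_ne i 0 with rfl | hne
      · rw [if_pos rfl, zero_sub]
        exact neg_mem (Ideal.mem_span_singleton.mpr ⟨Polynomial.C c₀, mul_comm _ _⟩)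
      · rw [if_neg hne, sub_zero]
        exact zero_mem _
    · rw [hQ₀def, Polynomial.coeff_sub, Polynomial.coeff_X_pow,
        if_neg (by omega : ¬ 0 = l), Polynomial.coeff_C, if_pos rfl, zero_sub,
        Ideal.span_singleton_pow, Ideal.mem_span_singleton, dvd_neg, hbdef]
      intro hdvd
      rw [sq] at hdvd
      have hXd : Polynomial.X ∣ Polynomial.C c₀ :=
        (mul_dvd_mul_iff_right (Polynomial.X_ne_zero (R := k))).mp hdvd
      rw [Polynomial.X_dvd_iff, Polynomial.coeff_C_zero] at hXd
      exact hc₀ hXd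
  have hQ₀irr : Irreducible Q₀ :=
    heis.irreducible hsp hQ₀monic.isPrimitive (by rw [hQ₀deg]; exact hl)
  have hQirr : Irreducible (Q₀.map (algebraMap (Polynomial k) (RatFunc k))) :=
    hQ₀monic.irreducible_iff_irreducible_map_fraction_map.mp hQ₀irr
  -- transfer irreducibility to `K`
  have hea : e (algebraMap (Polynomial k) (RatFunc k) b) = a := by
    apply Subtype.ext
    rw [hecoe, hΨdef, IsFractionRing.lift_algebraMap]
    rw [hadef]
    show ψ b = A ^ u * F
    rw [hbdef, map_mul]
    have hX : ψ Polynomial.X = F := by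
      rw [hψdef, Polynomial.coe_eval₂RingHom, Polynomial.eval₂_X, hFdef]
    have hC : ψ (Polynomial.C c₀) = A ^ u := by
      rw [hψdef, Polynomial.coe_eval₂RingHom, Polynomial.eval₂_C, hc₀def]
      rw [map_zpow₀ (φ.comp (MvPolynomial.C : k →+* MvPolynomial (Fin n) k)) α u]
      rfl
    rw [hX, hC]
  have hQmap : (Q₀.map (algebraMap (Polynomial k) (RatFunc k))).map (e : RatFunc k →+* K)
      = P := by
    rw [Polynomial.map_map, hQ₀def, Polynomial.map_sub, Polynomial.map_pow,
      Polynomial.map_X, Polynomial.map_C, hPdef]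
    have hcomp : ((e : RatFunc k →+* K).comp (algebraMap (Polynomial k) (RatFunc k))) b = a :=
      hea
    rw [hcomp]
  have hPirr : Irreducible P := by
    rw [← hQmap]
    have : (Q₀.map (algebraMap (Polynomial k) (RatFunc k))).map (e : RatFunc k →+* K)
        = Polynomial.mapEquiv e (Q₀.map (algebraMap (Polynomial k) (RatFunc k))) := by
      rw [Polynomial.mapEquiv_apply]
    rw [this]
    exact (MulEquiv.irreducible_iff (Polynomial.mapEquiv e)).mpr hQirr
  -- minimal polynomial and degree
  have hmin : minpoly K h = P := (minpoly.eq_of_irreducible_of_monic hPirr hroot hPmonic).symm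
  have hint : IsIntegral K h := ⟨P, hPmonic, by rw [← Polynomial.aeval_def, hroot]⟩
  -- adjoin equality
  have hGmem : G ∈ IntermediateField.adjoin K {h} := by
    rw [← key2]
    refine mul_mem (zpow_mem ?_ v) (zpow_mem (IntermediateField.mem_adjoin_simple_self K h) _)
    exact IntermediateField.algebraMap_mem (IntermediateField.adjoin K {h}) (⟨A, hAK⟩ : K)
  have hhmem : h ∈ IntermediateField.adjoin K {G} := by
    rw [hhdef]
    refine mul_mem (zpow_mem (IntermediateField.mem_adjoin_simple_self K G) _) (zpow_mem ?_ v)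
    exact IntermediateField.algebraMap_mem (IntermediateField.adjoin K {G}) (⟨F, hFK⟩ : K)
  have hadj : IntermediateField.adjoin K {G} = IntermediateField.adjoin K {h} := by
    apply le_antisymm
    · rw [IntermediateField.adjoin_le_iff]
      exact Set.singleton_subset_iff.mpr hGmem
    · rw [IntermediateField.adjoin_le_iff]
      exact Set.singleton_subset_iff.mpr hhmem
  rw [hadj, IntermediateField.adjoin.finrank hint, hmin, hPdef]
  exact Polynomial.natDegree_X_pow_sub_C
end
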